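/- If s = 5k+2 or s = 5k-2 for some integer k, then γ̄(ℤ, {1, -1, s, -s}) = 1/5. -/

import Mathlib

open Filter

open scoped Classical in
noncomputable def lowerDensity (U : Set ℤ) : ℝ :=
  Filter.liminf (fun n : ℕ =>
    (((Finset.Icc (-(n:ℤ)) (n:ℤ)).filter (fun m => m ∈ U)).card : ℝ) / (2*(n:ℝ)+1))
    Filter.atTop

/-- `D` is a dominating set of the Cayley digraph `Γ(ℤ, S)`. -/
def IsDominating (S D : Set ℤ) : Prop :=
  ∀ v : ℤ, v ∈ D ∨ ∃ u ∈ D, ∃ s ∈ S, v = u + s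

/-- The domination ratio of `Γ(ℤ, S)`. -/
noncomputable def domRatio (S : Set ℤ) : ℝ :=
  sInf {x : ℝ | ∃ D : Set ℤ, IsDominating S D ∧ x = lowerDensity D}

lemma tendsto_aux (c : ℝ) :
    Tendsto (fun n : ℕ => (2*(n:ℝ) + c)/(5*(2*(n:ℝ)+1))) atTop (nhds (1/5)) := by
  have h1 : Tendsto (fun n : ℕ => (5:ℝ)*(2*(n:ℝ)+1)) atTop atTop := by
    apply tendsto_atTop_mono (f := fun n : ℕ => (n:ℝ))
    · intro n; nlinarith [Nat.cast_nonneg (α := ℝ) n]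
    · exact tendsto_natCast_atTop_atTop
  have h2 : Tendsto (fun n : ℕ => (c - 1)/(5*(2*(n:ℝ)+1))) atTop (nhds 0) :=
    tendsto_const_nhds.div_atTop h1
  have heq : (fun n : ℕ => (2*(n:ℝ) + c)/(5*(2*(n:ℝ)+1)))
      = fun n : ℕ => 1/5 + (c - 1)/(5*(2*(n:ℝ)+1)) := by
    funext n
    have hn : (2*(n:ℝ)+1) ≠ 0 := by positivity
    field_simp
    ring
  rw [heq]
  simpa using tendsto_const_nhds.add h2

open scoped Classical in
lemma card_mult5 (n : ℕ) :
    ((Finset.Icc (-(n:ℤ)) (n:ℤ)).filter (fun m => m ∈ {m : ℤ | (5:ℤ) ∣ m})).card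
      = 2*(n/5)+1 := by
  have himg : ((Finset.Icc (-(n:ℤ)) (n:ℤ)).filter (fun m => m ∈ {m : ℤ | (5:ℤ) ∣ m}))
      = (Finset.Icc (-((n/5 : ℕ):ℤ)) ((n/5 : ℕ):ℤ)).image (fun j => 5*j) := by
    ext m
    simp only [Finset.mem_filter, Finset.mem_Icc, Set.mem_setOf_eq, Finset.mem_image]
    constructor
    · rintro ⟨⟨h1, h2⟩, h3⟩
      exact ⟨m / 5, by omega, by omega⟩
    · rintro ⟨j, hj, rfl⟩
      omega
  rw [himg, Finset.card_image_of_injective _ (fun a b h => by omega)]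
  rw [Int.card_Icc]
  omega

open scoped Classical in
lemma count_lower (s : ℤ) (D : Set ℤ) (hD : IsDominating {1, -1, s, -s} D)
    (hs1 : 1 ≤ s.natAbs) (n : ℕ) (hn : s.natAbs ≤ n) :
    2*(n - s.natAbs) + 1 ≤ 5 * ((Finset.Icc (-(n:ℤ)) (n:ℤ)).filter (fun m => m ∈ D)).card := by
  have hdom : ∀ v : ℤ, ∃ u, u ∈ D ∧
      (v = u ∨ v = u + 1 ∨ v = u - 1 ∨ v = u + s ∨ v = u - s) := by
    intro v
    rcases hD v with h | ⟨u, hu, t, ht, rfl⟩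
    · exact ⟨v, h, Or.inl rfl⟩
    · simp only [Set.mem_insert_iff, Set.mem_singleton_iff] at ht
      rcases ht with rfl | rfl | rfl | rfl
      · exact ⟨u, hu, by omega⟩
      · exact ⟨u, hu, by omega⟩
      · exact ⟨u, hu, by omega⟩
      · exact ⟨u, hu, by omega⟩
  choose f hfD hfv using hdom
  set M : ℤ := (s.natAbs : ℤ) with hM
  have key : (Finset.Icc (-(n:ℤ) + M) ((n:ℤ) - M)).card
      ≤ 5 * ((Finset.Icc (-(n:ℤ)) (n:ℤ)).filter (fun m => m ∈ D)).card := by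
    apply Finset.card_le_mul_card_image_of_maps_to (f := f)
    · intro v hv
      simp only [Finset.mem_Icc] at hv
      simp only [Finset.mem_filter, Finset.mem_Icc]
      refine ⟨?_, hfD v⟩
      have := hfv v
      omega
    · intro u _
      have hsub : ((Finset.Icc (-(n:ℤ) + M) ((n:ℤ) - M)).filter (fun v => f v = u))
          ⊆ {u, u+1, u-1, u+s, u-s} := by
        intro v hv
        simp only [Finset.mem_filter] at hv
        have := hfv v
        rw [hv.2] at this
        simp only [Finset.mem_insert, Finset.mem_singleton]
        omega
      calc ((Finset.Icc (-(n:ℤ) + M) ((n:ℤ) - M)).filter (fun v => f v = u)).card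
          ≤ ({u, u+1, u-1, u+s, u-s} : Finset ℤ).card := Finset.card_le_card hsub
        _ ≤ 5 := by
            apply le_trans (Finset.card_insert_le _ _)
            apply Nat.succ_le_succ
            apply le_trans (Finset.card_insert_le _ _)
            apply Nat.succ_le_succ
            apply le_trans (Finset.card_insert_le _ _)
            apply Nat.succ_le_succ
            apply le_trans (Finset.card_insert_le _ _)
            simp
  rw [Int.card_Icc] at key
  omega

open scoped Classical in
lemma dens_lower (s : ℤ) (D : Set ℤ) (hD : IsDominating {1, -1, s, -s} D)
    (hs1 : 1 ≤ s.natAbs) : (1:ℝ)/5 ≤ lowerDensity D := by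
  set M : ℕ := s.natAbs with hM
  set a : ℕ → ℝ := fun n =>
    (((Finset.Icc (-(n:ℤ)) (n:ℤ)).filter (fun m => m ∈ D)).card : ℝ) / (2*(n:ℝ)+1) with ha
  set b : ℕ → ℝ := fun n => (2*(n:ℝ) + (1 - 2*M))/(5*(2*(n:ℝ)+1)) with hb
  have htb : Tendsto b atTop (nhds (1/5)) := tendsto_aux _
  have hab : ∀ᶠ n in atTop, b n ≤ a n := by
    filter_upwards [eventually_ge_atTop M] with n hn
    have hkey := count_lower s D hD hs1 n hn
    have hc : (2*(n:ℝ) + 1 - 2*M) ≤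
        5 * (((Finset.Icc (-(n:ℤ)) (n:ℤ)).filter (fun m => m ∈ D)).card : ℝ) := by
      have : ((2*(n - M) + 1 : ℕ) : ℝ)
          ≤ ((5 * ((Finset.Icc (-(n:ℤ)) (n:ℤ)).filter (fun m => m ∈ D)).card : ℕ) : ℝ) := by
        exact_mod_cast hkey
      push_cast [Nat.cast_sub hn] at this
      linarith
    simp only [ha, hb]
    rw [div_le_div_iff₀ (by positivity) (by positivity)]
    nlinarith [Nat.cast_nonneg (α := ℝ) n]
  have hbd : IsBoundedUnder (· ≥ ·) atTop b := htb.isBoundedUnder_ge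
  have hcb : IsCoboundedUnder (· ≥ ·) atTop a := by
    refine isCoboundedUnder_ge_of_le atTop (x := 1) fun n => ?_
    simp only [ha]
    rw [div_le_one (by positivity)]
    have h1 : ((Finset.Icc (-(n:ℤ)) (n:ℤ)).filter (fun m => m ∈ D)).card
        ≤ (Finset.Icc (-(n:ℤ)) (n:ℤ)).card := Finset.card_filter_le _ _
    have h2 : (Finset.Icc (-(n:ℤ)) (n:ℤ)).card = 2*n+1 := by
      rw [Int.card_Icc]; omega
    have : (((Finset.Icc (-(n:ℤ)) (n:ℤ)).filter (fun m => m ∈ D)).card : ℝ)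
        ≤ ((2*n+1 : ℕ) : ℝ) := by exact_mod_cast h2 ▸ h1
    push_cast at this
    linarith
  calc (1:ℝ)/5 = liminf b atTop := (htb.liminf_eq).symm
    _ ≤ liminf a atTop := liminf_le_liminf hab hbd hcb
    _ = lowerDensity D := rfl

lemma dens_mult5 : lowerDensity {m : ℤ | (5:ℤ) ∣ m} = 1/5 := by
  have hfun : ∀ n : ℕ,
      ((((Finset.Icc (-(n:ℤ)) (n:ℤ)).filter (fun m => m ∈ {m : ℤ | (5:ℤ) ∣ m})).card : ℝ)
        / (2*(n:ℝ)+1)) = ((2*(n/5 : ℕ)+1 : ℕ) : ℝ) / (2*(n:ℝ)+1) := by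
    intro n
    classical
    rw [card_mult5]
  have ht : Tendsto (fun n : ℕ =>
      ((((Finset.Icc (-(n:ℤ)) (n:ℤ)).filter (fun m => m ∈ {m : ℤ | (5:ℤ) ∣ m})).card : ℝ)
        / (2*(n:ℝ)+1))) atTop (nhds (1/5)) := by
    simp only [hfun]
    apply tendsto_of_tendsto_of_tendsto_of_le_of_le (tendsto_aux (-3)) (tendsto_aux 5)
    · intro n
      have h1 : 5 * (n/5 : ℕ) ≤ n := by omega
      have h2 : n ≤ 5 * (n/5 : ℕ) + 4 := by omega
      have c1 : 5 * ((n/5 : ℕ) : ℝ) ≤ (n:ℝ) := by exact_mod_cast h1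
      have c2 : (n:ℝ) ≤ 5 * ((n/5 : ℕ) : ℝ) + 4 := by exact_mod_cast h2
      push_cast
      rw [div_le_div_iff₀ (by positivity) (by positivity)]
      nlinarith [Nat.cast_nonneg (α := ℝ) n]
    · intro n
      have h1 : 5 * (n/5 : ℕ) ≤ n := by omega
      have c1 : 5 * ((n/5 : ℕ) : ℝ) ≤ (n:ℝ) := by exact_mod_cast h1
      push_cast
      rw [div_le_div_iff₀ (by positivity) (by positivity)]
      nlinarith [Nat.cast_nonneg (α := ℝ) n]
  unfold lowerDensity
  rw [← ht.liminf_eq]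
  congr 1
  funext n
  norm_cast

lemma dom_mult5 (s k : ℤ) (hs : s = 5*k + 2 ∨ s = 5*k - 2) :
    IsDominating {1, -1, s, -s} {m : ℤ | (5:ℤ) ∣ m} := by
  intro v
  have h : (5:ℤ) ∣ v ∨ (5:ℤ) ∣ (v-1) ∨ (5:ℤ) ∣ (v+1) ∨ (5:ℤ) ∣ (v-s) ∨ (5:ℤ) ∣ (v+s) := by
    rcases hs with rfl | rfl <;> omega
  rcases h with h | h | h | h | h
  · exact Or.inl h
  · exact Or.inr ⟨v-1, h, 1, by simp, by ring⟩
  · exact Or.inr ⟨v+1, h, -1, by simp, by ring⟩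
  · exact Or.inr ⟨v-s, h, s, by simp, by ring⟩
  · exact Or.inr ⟨v+s, h, -s, by simp, by ring⟩

theorem stmt_14 (s k : ℤ) (hs : s = 5*k + 2 ∨ s = 5*k - 2) :
    domRatio {1, -1, s, -s} = 1/5 := by
  have hs1 : 1 ≤ s.natAbs := by rcases hs with rfl | rfl <;> omega
  have hlb : ∀ x ∈ {x : ℝ | ∃ D : Set ℤ, IsDominating {1, -1, s, -s} D ∧ x = lowerDensity D},
      (1:ℝ)/5 ≤ x := by
    rintro x ⟨D, hD, rfl⟩
    exact dens_lower s D hD hs1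
  have hmem : (1:ℝ)/5 ∈
      {x : ℝ | ∃ D : Set ℤ, IsDominating {1, -1, s, -s} D ∧ x = lowerDensity D} :=
    ⟨{m : ℤ | (5:ℤ) ∣ m}, dom_mult5 s k hs, dens_mult5.symm⟩
  apply le_antisymm
  · exact csInf_le ⟨1/5, hlb⟩ hmem
  · exact le_csInf ⟨_, hmem⟩ hlb
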